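/- Suppose A is a nondegenerate Hermitian operator with eigenbasis {a_i} on ℂ^d, F is Hermitian with spectral projectors F_k (at least two distinct ones, i.e., F is not a multiple of the identity), and ψ is a unit vector. If all coarse-grained KD quasiprobabilities Q_{ik} = ⟨ψ|F_k|a_i⟩⟨a_i|ψ⟩ are nonzero nonnegative reals, we obtain a contradiction; hence if all Q_{ik} are nonnegative reals, some Q_{ik} = 0. -/

import Mathlib

open scoped InnerProductSpace BigOperators ComplexOrder

local notation "⟪" x ", " y "⟫" => @inner ℂ _ _ x y

theorem stmt18 (d : ℕ) {ι : Type*} [Fintype ι]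
    (k₁ k₂ : ι) (hk : k₁ ≠ k₂)
    (a : OrthonormalBasis (Fin d) ℂ (EuclideanSpace ℂ (Fin d)))
    (F : ι → (EuclideanSpace ℂ (Fin d) →ₗ[ℂ] EuclideanSpace ℂ (Fin d)))
    (hsym : ∀ k, LinearMap.IsSymmetric (F k))
    (hproj : ∀ k, F k ∘ₗ F k = F k)
    (horth : ∀ k l, k ≠ l → F k ∘ₗ F l = 0)
    (hsum : ∑ k, F k = LinearMap.id)
    (ψ : EuclideanSpace ℂ (Fin d)) (hψ : ‖ψ‖ = 1)
    (hclassical : ∀ i k, 0 ≤ ⟪ψ, F k (a i)⟫ * ⟪a i, ψ⟫) :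
    ∃ i k, ⟪ψ, F k (a i)⟫ * ⟪a i, ψ⟫ = 0 := by
  by_contra hcon
  push_neg at hcon
  have hpos : ∀ i k, 0 < ⟪ψ, F k (a i)⟫ * ⟪a i, ψ⟫ := fun i k =>
    lt_of_le_of_ne (hclassical i k) (Ne.symm (hcon i k))
  -- Fin d is nonempty
  have hne : Nonempty (Fin d) := by
    by_contra h
    haveI : IsEmpty (Fin d) := not_nonempty_iff.mp h
    have : ψ = 0 := Subsingleton.elim ψ 0
    rw [this, norm_zero] at hψ
    exact one_ne_zero hψ.symm
  -- the key orthogonality relation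
  have hzero : (⟪F k₁ ψ, F k₂ ψ⟫ : ℂ) = 0 := by
    rw [hsym k₁]
    have h0 : F k₁ (F k₂ ψ) = 0 := by
      have := congrArg (fun T => T ψ) (horth k₁ k₂ hk)
      simpa using this
    rw [h0, inner_zero_right]
  rw [← OrthonormalBasis.sum_inner_mul_inner a] at hzero
  have hterm : ∀ i, 0 < ⟪F k₁ ψ, a i⟫ * ⟪a i, F k₂ ψ⟫ := by
    intro i
    have h1 := hpos i k₁
    have h2 := hpos i k₂
    have hc : ⟪a i, ψ⟫ ≠ 0 := by
      intro h; rw [h, mul_zero] at h1; exact lt_irrefl 0 h1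
    have e1 : ⟪F k₁ ψ, a i⟫ = ⟪ψ, F k₁ (a i)⟫ := hsym k₁ ψ (a i)
    have e2 : ⟪a i, F k₂ ψ⟫ = starRingEnd ℂ ⟪ψ, F k₂ (a i)⟫ := by
      rw [← inner_conj_symm, hsym k₂ ψ (a i)]
    have h2conj : starRingEnd ℂ (⟪ψ, F k₂ (a i)⟫ * ⟪a i, ψ⟫)
        = ⟪ψ, F k₂ (a i)⟫ * ⟪a i, ψ⟫ := by
      rw [Complex.conj_eq_iff_im]
      exact (Complex.le_def.mp h2.le).2.symm
    have key : ⟪F k₁ ψ, a i⟫ * ⟪a i, F k₂ ψ⟫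
        = (⟪ψ, F k₁ (a i)⟫ * ⟪a i, ψ⟫) * (⟪ψ, F k₂ (a i)⟫ * ⟪a i, ψ⟫)
          * ((Complex.normSq ⟪a i, ψ⟫ : ℝ) : ℂ)⁻¹ := by
      rw [e1, e2, Complex.normSq_eq_conj_mul_self]
      generalize hq1 : (⟪ψ, F k₁ (a i)⟫ : ℂ) = q1 at *
      generalize hq2 : (⟪ψ, F k₂ (a i)⟫ : ℂ) = q2 at *
      generalize hcc : (⟪a i, ψ⟫ : ℂ) = c at *
      have hcs : (starRingEnd ℂ) c ≠ 0 := by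
        simpa using hc
      push_cast
      field_simp
      calc q1 * (starRingEnd ℂ) q2 * (starRingEnd ℂ) c
          = q1 * ((starRingEnd ℂ) q2 * (starRingEnd ℂ) c) := by ring
        _ = q1 * c * q2 := by rw [← map_mul, h2conj]; ring
    rw [key]
    have hn : (0:ℂ) < ((Complex.normSq ⟪a i, ψ⟫ : ℝ) : ℂ)⁻¹ := by
      rw [← Complex.ofReal_inv]
      rw [Complex.zero_lt_real]
      exact inv_pos.mpr (Complex.normSq_pos.mpr hc)
    exact mul_pos (mul_pos h1 h2) hn
  have := Finset.sum_pos (fun i _ => hterm i) Finset.univ_nonempty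
  rw [hzero] at this
  exact lt_irrefl 0 this
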